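/- Let X ⊆ B_d, fix an integer k ≥ 1, reals β, β̂ ≥ 1 and B, B̂ ≥ 0, and a grid length c > 0. For x ∈ ℝ^d let x̃ denote the center of the cell of the axis-aligned grid of side c containing x (so that κ(x, x̃) ≤ c·Δ/2). Suppose F* ⊆ B_d with |F*| = k satisfies sup_{x∈X} κ(x, F*) ≤ β·OPT + B, let S ⊆ X be a finite set such that for every f ∈ F* there exists x_f ∈ S whose nearest point in F* is f, and suppose G̃ ⊆ B_d satisfies max_{x∈S} κ(x̃, G̃) ≤ β̂·(inf over G ⊆ B_d with |G| = k of max_{x∈S} κ(x̃, G)) + B̂. Then for every x ∈ X, κ(x, G̃) ≤ (2β + β̂)·OPT + 2B + B̂ + (4β + 2β̂ + 1)·c·Δ. -/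
import Mathlib


/-- `κ(x, F) = min_{f ∈ F} N (x - f)`. -/
noncomputable def setDist {d : ℕ} (N : Seminorm ℝ (Fin d → ℝ))
    (x : Fin d → ℝ) (F : Finset (Fin d → ℝ)) : ℝ :=
  sInf {r | ∃ f ∈ F, r = N (x - f)}

/-- `B_d`: the `κ`-ball of diameter 1 centered at the origin. -/
def ballD {d : ℕ} (N : Seminorm ℝ (Fin d → ℝ)) : Set (Fin d → ℝ) := {x | N x ≤ 1 / 2}

/-- The `κ`-diameter `Δ` of the unit cube `[0,1)^d`. -/
noncomputable def cubeDiam {d : ℕ} (N : Seminorm ℝ (Fin d → ℝ)) : ℝ :=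
  sSup {r | ∃ x y : Fin d → ℝ, (∀ j, 0 ≤ x j ∧ x j < 1) ∧ (∀ j, 0 ≤ y j ∧ y j < 1) ∧
    r = N (x - y)}

/-- The statistical `k`-centers cost of `F` over the domain `Y`: `sup_{x ∈ Y} κ(x, F)`. -/
noncomputable def kcCost {d : ℕ} (N : Seminorm ℝ (Fin d → ℝ))
    (Y : Set (Fin d → ℝ)) (F : Finset (Fin d → ℝ)) : ℝ :=
  sSup {t | ∃ x ∈ Y, t = setDist N x F}

/-- The optimal statistical `k`-centers cost over the domain `Y`, with centers in `B_d`. -/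
noncomputable def kcOPT {d : ℕ} (N : Seminorm ℝ (Fin d → ℝ))
    (k : ℕ) (Y : Set (Fin d → ℝ)) : ℝ :=
  sInf {r | ∃ F : Finset (Fin d → ℝ), ↑F ⊆ ballD N ∧ F.card = k ∧ r = kcCost N Y F}

lemma setDist_nonneg' {d : ℕ} (N : Seminorm ℝ (Fin d → ℝ)) (x : Fin d → ℝ)
    (F : Finset (Fin d → ℝ)) : 0 ≤ setDist N x F := by
  apply Real.sInf_nonneg
  rintro r ⟨g, hg, rfl⟩; exact apply_nonneg N _

lemma setDist_le' {d : ℕ} (N : Seminorm ℝ (Fin d → ℝ)) (x : Fin d → ℝ)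
    {F : Finset (Fin d → ℝ)} {g : Fin d → ℝ} (hg : g ∈ F) :
    setDist N x F ≤ N (x - g) := by
  have hbdd : BddBelow {r | ∃ f ∈ F, r = (N (x - f) : ℝ)} := by
    refine ⟨0, ?_⟩; rintro r ⟨g', hg', rfl⟩; exact apply_nonneg N _
  exact csInf_le hbdd ⟨g, hg, rfl⟩

lemma setDist_exists_min' {d : ℕ} (N : Seminorm ℝ (Fin d → ℝ)) (x : Fin d → ℝ)
    {F : Finset (Fin d → ℝ)} (hF : F.Nonempty) :
    ∃ f ∈ F, setDist N x F = N (x - f) := by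
  obtain ⟨f, hf, hmin⟩ := F.exists_min_image (fun f => (N (x - f) : ℝ)) hF
  refine ⟨f, hf, le_antisymm (setDist_le' N x hf) ?_⟩
  have hne : {r | ∃ f ∈ F, r = (N (x - f) : ℝ)}.Nonempty := ⟨N (x - f), f, hf, rfl⟩
  apply le_csInf hne
  rintro r ⟨g, hg, rfl⟩; exact hmin g hg

lemma setDist_triangle' {d : ℕ} (N : Seminorm ℝ (Fin d → ℝ)) (x y : Fin d → ℝ)
    (F : Finset (Fin d → ℝ)) : setDist N x F ≤ N (x - y) + setDist N y F := by
  rcases F.eq_empty_or_nonempty with rfl | hF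
  · have h1 : setDist N x (∅ : Finset (Fin d → ℝ)) = 0 := by
      have : {r | ∃ f ∈ (∅ : Finset (Fin d → ℝ)), r = N (x - f)} = (∅ : Set ℝ) := by simp
      rw [setDist, this, Real.sInf_empty]
    rw [h1]
    have := setDist_nonneg' N y (∅ : Finset (Fin d → ℝ))
    have := apply_nonneg N (x - y)
    linarith
  · obtain ⟨f, hf, heq⟩ := setDist_exists_min' N y hF
    have h1 : setDist N x F ≤ N (x - f) := setDist_le' N x hf
    have h2 : (N (x - f) : ℝ) ≤ N (x - y) + N (y - f) := by
      have e : x - f = (x - y) + (y - f) := by abel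
      rw [e]; exact map_add_le_add N _ _
    linarith [heq ▸ le_refl (setDist N y F)]

/-- `k`-centers oracle with a grid: rounding the sample points to the centers of the cells
of an axis-aligned grid of side `c` before calling a `(β̂,B̂)`-approximation oracle costs
only an extra additive `(4β + 2β̂ + 1)·c·Δ` term. -/
theorem k_centers_oracle_with_grid {d k : ℕ} (hk : 1 ≤ k)
    (N : Seminorm ℝ (Fin d → ℝ)) (hNdef : ∀ x, N x = 0 → x = 0)
    (Δ : ℝ) (hΔdef : Δ = cubeDiam N)
    (X : Set (Fin d → ℝ)) (hX : X ⊆ ballD N)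
    (β B βh Bh : ℝ) (hβ : 1 ≤ β) (hβh : 1 ≤ βh) (hB : 0 ≤ B) (hBh : 0 ≤ Bh)
    (c : ℝ) (hc : 0 < c)
    -- `Tc x` is the center of the cell of the axis-aligned grid of side `c` containing `x`,
    (Tc : (Fin d → ℝ) → Fin d → ℝ)
    (hTc : ∀ x : Fin d → ℝ, ∃ z : Fin d → ℤ,
      (∀ j, c * z j ≤ x j ∧ x j < c * (z j + 1)) ∧ ∀ j, Tc x j = c * z j + c / 2)
    -- so that `κ(x, x̃) ≤ c·Δ/2`:
    (hTcDist : ∀ x : Fin d → ℝ, (N (x - Tc x) : ℝ) ≤ c * Δ / 2)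
    (Fstar : Finset (Fin d → ℝ)) (hFstarSub : ↑Fstar ⊆ ballD N) (hFstarCard : Fstar.card = k)
    (hFstarApx : ∀ x ∈ X, setDist N x Fstar ≤ β * kcOPT N k X + B)
    (S : Finset (Fin d → ℝ)) (hS : ↑S ⊆ X)
    (hScover : ∀ f ∈ Fstar, ∃ x ∈ S, ∀ f' ∈ Fstar, (N (x - f) : ℝ) ≤ N (x - f'))
    (Gt : Finset (Fin d → ℝ)) (hGtSub : ↑Gt ⊆ ballD N)
    (hGtApx : ∀ x ∈ S, setDist N (Tc x) Gt
      ≤ βh * sInf {r | ∃ G : Finset (Fin d → ℝ), ↑G ⊆ ballD N ∧ G.card = k ∧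
            r = sSup {t | ∃ x ∈ (S : Set (Fin d → ℝ)), t = setDist N (Tc x) G}} + Bh) :
    ∀ x ∈ X, setDist N x Gt
      ≤ (2 * β + βh) * kcOPT N k X + 2 * B + Bh + (4 * β + 2 * βh + 1) * c * Δ := by

  intro x hx
  have hΔc : 0 ≤ c * Δ := by
    have h0 := hTcDist 0
    have h1 := apply_nonneg N (0 - Tc 0)
    linarith
  have hFstarNe : Fstar.Nonempty := Finset.card_pos.mp (by omega)
  -- every setDist to a set of centers in B_d, from a point of X, is at most kcCost
  have hcost_le : ∀ (F : Finset (Fin d → ℝ)), ↑F ⊆ ballD N → ∀ y ∈ X,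
      setDist N y F ≤ kcCost N X F := by
    intro F hFsub y hy
    have hbdd : BddAbove {t | ∃ x ∈ X, t = setDist N x F} := by
      refine ⟨1, ?_⟩
      rintro t ⟨z, hz, rfl⟩
      rcases F.eq_empty_or_nonempty with rfl | hFne
      · have he : {r | ∃ f ∈ (∅ : Finset (Fin d → ℝ)), r = (N (z - f) : ℝ)} = (∅ : Set ℝ) := by
          simp
        rw [setDist, he, Real.sInf_empty]; norm_num
      · obtain ⟨f, hf⟩ := hFne
        have h1 : setDist N z F ≤ N (z - f) := setDist_le' N z hf
        have h2 : (N (z - f) : ℝ) ≤ N z + N f := by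
          have e : z - f = z + (-f) := by abel
          calc (N (z - f) : ℝ) = N (z + (-f)) := by rw [e]
          _ ≤ N z + N (-f) := map_add_le_add N _ _
          _ = N z + N f := by rw [map_neg_eq_map]
        have h3 : (N z : ℝ) ≤ 1 / 2 := hX (hz)
        have h4 : (N f : ℝ) ≤ 1 / 2 := hFsub hf
        linarith
    exact le_csSup hbdd ⟨y, hy, rfl⟩
  have hkcCost_nonneg : ∀ (F : Finset (Fin d → ℝ)) (Y : Set (Fin d → ℝ)),
      0 ≤ kcCost N Y F := by
    intro F Y
    apply Real.sSup_nonneg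
    rintro t ⟨z, hz, rfl⟩; exact setDist_nonneg' N z F
  set OPT := kcOPT N k X with hOPT
  have hOPT_nonneg : 0 ≤ OPT := by
    apply Real.sInf_nonneg
    rintro r ⟨F, hFsub, hFcard, rfl⟩; exact hkcCost_nonneg F X
  set OPTt := sInf {r | ∃ G : Finset (Fin d → ℝ), ↑G ⊆ ballD N ∧ G.card = k ∧
      r = sSup {t | ∃ x ∈ (S : Set (Fin d → ℝ)), t = setDist N (Tc x) G}} with hOPTt
  -- key: OPTt ≤ OPT + c*Δ/2
  have hkey : OPTt ≤ OPT + c * Δ / 2 := by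
    have hbdd : BddBelow {r | ∃ G : Finset (Fin d → ℝ), ↑G ⊆ ballD N ∧ G.card = k ∧
        r = sSup {t | ∃ x ∈ (S : Set (Fin d → ℝ)), t = setDist N (Tc x) G}} := by
      refine ⟨0, ?_⟩
      rintro r ⟨G, hGsub, hGcard, rfl⟩
      apply Real.sSup_nonneg
      rintro t ⟨z, hz, rfl⟩; exact setDist_nonneg' N _ G
    have h1 : ∀ r ∈ {r | ∃ F : Finset (Fin d → ℝ), ↑F ⊆ ballD N ∧ F.card = k ∧
        r = kcCost N X F}, OPTt - c * Δ / 2 ≤ r := by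
      rintro r ⟨F, hFsub, hFcard, rfl⟩
      have h2 : OPTt ≤ sSup {t | ∃ x ∈ (S : Set (Fin d → ℝ)), t = setDist N (Tc x) F} := by
        refine csInf_le hbdd ?_
        exact ⟨F, hFsub, hFcard, rfl⟩
      have h3 : sSup {t | ∃ x ∈ (S : Set (Fin d → ℝ)), t = setDist N (Tc x) F}
          ≤ kcCost N X F + c * Δ / 2 := by
        apply Real.sSup_le
        · rintro t ⟨y, hy, rfl⟩
          have h4 : setDist N (Tc y) F ≤ N (Tc y - y) + setDist N y F :=
            setDist_triangle' N _ _ F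
          have h5 : (N (Tc y - y) : ℝ) ≤ c * Δ / 2 := by
            have e : Tc y - y = -(y - Tc y) := by abel
            rw [e, map_neg_eq_map]; exact hTcDist y
          have h6 : setDist N y F ≤ kcCost N X F := hcost_le F hFsub y (hS hy)
          linarith
        · linarith [hkcCost_nonneg F X]
      linarith
    have h7 : OPTt - c * Δ / 2 ≤ OPT :=
      le_csInf ⟨kcCost N X Fstar, Fstar, hFstarSub, hFstarCard, rfl⟩ h1
    linarith
  -- main chain
  obtain ⟨f, hfF, hfx⟩ := setDist_exists_min' N x hFstarNe
  have hxf : (N (x - f) : ℝ) ≤ β * OPT + B := by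
    rw [← hfx]; exact hFstarApx x hx
  obtain ⟨s, hsS, hsmin⟩ := hScover f hfF
  obtain ⟨f', hf'F, hsf'⟩ := setDist_exists_min' N s hFstarNe
  have hsf : (N (s - f) : ℝ) ≤ β * OPT + B := by
    have := hsmin f' hf'F
    have h8 : setDist N s Fstar ≤ β * OPT + B := hFstarApx s (hS hsS)
    linarith [hsf' ▸ h8]
  have hGtb : setDist N (Tc s) Gt ≤ βh * OPTt + Bh := hGtApx s hsS
  have htri : setDist N x Gt ≤ N (x - Tc s) + setDist N (Tc s) Gt :=
    setDist_triangle' N x (Tc s) Gt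
  have hxTcs : (N (x - Tc s) : ℝ) ≤ N (x - f) + N (s - f) + c * Δ / 2 := by
    have e : x - Tc s = ((x - f) + (-(s - f))) + (s - Tc s) := by abel
    calc (N (x - Tc s) : ℝ) = N (((x - f) + (-(s - f))) + (s - Tc s)) := by rw [e]
    _ ≤ N ((x - f) + (-(s - f))) + N (s - Tc s) := map_add_le_add N _ _
    _ ≤ (N (x - f) + N (-(s - f))) + N (s - Tc s) := by
        linarith [map_add_le_add N (x - f) (-(s - f))]
    _ = (N (x - f) + N (s - f)) + N (s - Tc s) := by rw [map_neg_eq_map]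
    _ ≤ N (x - f) + N (s - f) + c * Δ / 2 := by linarith [hTcDist s]
  have hOPTt_nonneg : 0 ≤ OPTt := by
    apply Real.sInf_nonneg
    rintro r ⟨G, hGsub, hGcard, rfl⟩
    apply Real.sSup_nonneg
    rintro t ⟨z, hz, rfl⟩; exact setDist_nonneg' N _ G
  have hmul : βh * OPTt ≤ βh * (OPT + c * Δ / 2) :=
    mul_le_mul_of_nonneg_left hkey (by linarith)
  nlinarith [mul_nonneg (show (0:ℝ) ≤ 4 * β + 3 / 2 * βh + 1 / 2 by linarith) hΔc]
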